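/- Let L' be a linear map on matrices with L'(1) = 0 and ‖L'(X)‖ ≤ K·‖X‖ for all matrices X (K ≥ 0), and let S = Q + R be matrices with Q·R = R·Q and L'(Q·X) = Q·L'(X) for every matrix X. Then for every matrix A: ‖Γ_{L'}(S², A)‖ ≤ 3·K·‖R‖·(2·‖Q‖ + ‖R‖)·‖A‖, where Γ_{L'}(X,Y) := L'(X·Y) − L'(X)·Y − X·L'(Y). -/

import Mathlib

open Matrix
open scoped Matrix.Norms.L2Operator

/-- `Γ_{L'}(X,Y) = L'(XY) − L'(X)Y − X L'(Y)` measures the failure of `L'` to satisfy the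
Leibniz rule. -/
noncomputable def leibnizDefect {n : Type*} [Fintype n] [DecidableEq n]
    (L' : Module.End ℂ (Matrix n n ℂ)) (X Y : Matrix n n ℂ) : Matrix n n ℂ :=
  L' (X * Y) - L' X * Y - X * L' Y

/-- If `L'(1) = 0`, `‖L'(X)‖ ≤ K‖X‖`, `S = Q + R` with `Q·R = R·Q` and `L'(Q·X) = Q·L'(X)`,
then `‖Γ_{L'}(S², A)‖ ≤ 3K‖R‖(2‖Q‖ + ‖R‖)‖A‖`. -/
theorem leibnizDefect_sq_norm_bound
    {n : Type*} [Fintype n] [DecidableEq n] [Nonempty n]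
    (L' : Module.End ℂ (Matrix n n ℂ))
    (hL1 : L' 1 = 0)
    (K : ℝ) (hK : 0 ≤ K)
    (hLnorm : ∀ X : Matrix n n ℂ, ‖L' X‖ ≤ K * ‖X‖)
    (S Q R : Matrix n n ℂ)
    (hS : S = Q + R)
    (hQR : Q * R = R * Q)
    (hQ : ∀ X : Matrix n n ℂ, L' (Q * X) = Q * L' X) :
    ∀ A : Matrix n n ℂ,
      ‖leibnizDefect L' (S * S) A‖ ≤ 3 * K * ‖R‖ * (2 * ‖Q‖ + ‖R‖) * ‖A‖ := by
  have hLQ : L' Q = 0 := by simpa [hL1] using hQ 1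
  have hbound : ∀ X A : Matrix n n ℂ, ‖leibnizDefect L' X A‖ ≤ 3 * K * ‖X‖ * ‖A‖ := by
    intro X A
    have h1 : ‖L' (X * A)‖ ≤ K * (‖X‖ * ‖A‖) :=
      (hLnorm _).trans (by nlinarith [Matrix.l2_opNorm_mul X A, norm_nonneg X, norm_nonneg A])
    have h2 : ‖L' X * A‖ ≤ K * ‖X‖ * ‖A‖ :=
      (Matrix.l2_opNorm_mul _ _).trans (by nlinarith [hLnorm X, norm_nonneg A])
    have h3 : ‖X * L' A‖ ≤ ‖X‖ * (K * ‖A‖) :=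
      (Matrix.l2_opNorm_mul _ _).trans (by nlinarith [hLnorm A, norm_nonneg X])
    calc ‖leibnizDefect L' X A‖ ≤ ‖L' (X * A)‖ + ‖L' X * A‖ + ‖X * L' A‖ := by
          unfold leibnizDefect
          exact (norm_sub_le _ _).trans (by gcongr; exact norm_sub_le _ _)
      _ ≤ 3 * K * ‖X‖ * ‖A‖ := by nlinarith [norm_nonneg X, norm_nonneg A]
  intro A
  have key : leibnizDefect L' (S * S) A =
      Q * leibnizDefect L' R A + leibnizDefect L' (R * Q) A + leibnizDefect L' (R * R) A := by
    subst hS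
    simp only [leibnizDefect, add_mul, mul_add, map_add, mul_assoc, hQ, hLQ]
    noncomm_ring
  rw [key]
  have b1 : ‖Q * leibnizDefect L' R A‖ ≤ ‖Q‖ * (3 * K * ‖R‖ * ‖A‖) :=
    (Matrix.l2_opNorm_mul _ _).trans (by
      have := hbound R A
      nlinarith [norm_nonneg Q])
  have b2 : ‖leibnizDefect L' (R * Q) A‖ ≤ 3 * K * (‖R‖ * ‖Q‖) * ‖A‖ :=
    (hbound (R * Q) A).trans (by gcongr; exact Matrix.l2_opNorm_mul R Q)
  have b3 : ‖leibnizDefect L' (R * R) A‖ ≤ 3 * K * (‖R‖ * ‖R‖) * ‖A‖ :=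
    (hbound (R * R) A).trans (by gcongr; exact Matrix.l2_opNorm_mul R R)
  calc ‖Q * leibnizDefect L' R A + leibnizDefect L' (R * Q) A + leibnizDefect L' (R * R) A‖
      ≤ ‖Q * leibnizDefect L' R A‖ + ‖leibnizDefect L' (R * Q) A‖ + ‖leibnizDefect L' (R * R) A‖ := by
        exact (norm_add_le _ _).trans (by gcongr; exact norm_add_le _ _)
    _ ≤ 3 * K * ‖R‖ * (2 * ‖Q‖ + ‖R‖) * ‖A‖ := by nlinarith []
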